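/- With $A$, $n$, $\vec{k} \le \vec{l}$, $F$, $G$ as above: $F$ is injective on the collection of sets $X \subseteq [A]^{k_1}\times\cdots\times[A]^{k_n}$ satisfying $G(X) = X$. That is, if $G(X)=X$, $G(Y)=Y$, and $F(X)=F(Y)$, then $X=Y$. -/
import Mathlib


variable {α : Type}

/-- `tuples k` is the set `[A]^{k₁} × ⋯ × [A]^{kₙ}` of tuples of finite
subsets with prescribed cardinalities. -/
def tuples (n : ℕ) (k : Fin n → ℕ) : Set (Fin n → Finset α) :=
  {x | ∀ i, (x i).card = k i}

/-- `F(X)`: tuples in `[A]^{l₁} × ⋯ × [A]^{lₙ}` extending (coordinatewise)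
some member of `X`. -/
def Fop (n : ℕ) (l : Fin n → ℕ) (X : Set (Fin n → Finset α)) :
    Set (Fin n → Finset α) :=
  {y | y ∈ tuples n l ∧ ∃ x ∈ X, ∀ i, x i ⊆ y i}

/-- `G(X)`: tuples in `[A]^{k₁} × ⋯ × [A]^{kₙ}` all of whose extensions in
`[A]^{l₁} × ⋯ × [A]^{lₙ}` lie in `F(X)`. -/
def Gop (n : ℕ) (k l : Fin n → ℕ) (X : Set (Fin n → Finset α)) :
    Set (Fin n → Finset α) :=
  {x | x ∈ tuples n k ∧
    ∀ y ∈ tuples (α := α) n l, (∀ i, x i ⊆ y i) → y ∈ Fop n l X}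

/-- `H(X) = G(X) \ X`. -/
def Hop (n : ℕ) (k l : Fin n → ℕ) (X : Set (Fin n → Finset α)) :
    Set (Fin n → Finset α) :=
  Gop n k l X \ X

/-- `F` is injective on the collection of `X ⊆ [A]^{k₁} × ⋯ × [A]^{kₙ}`
with `G(X) = X`. -/
theorem stmt_9 (n : ℕ) (hn : 1 ≤ n) (k l : Fin n → ℕ) (hkl : ∀ i, k i ≤ l i)
    (X Y : Set (Fin n → Finset α)) (hX : X ⊆ tuples n k) (hY : Y ⊆ tuples n k)
    (hGX : Gop n k l X = X) (hGY : Gop n k l Y = Y)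
    (hF : Fop n l X = Fop n l Y) : X = Y := by
  have key : ∀ (X Y : Set (Fin n → Finset α)), X ⊆ tuples n k →
      Gop n k l Y = Y → Fop n l X = Fop n l Y → X ⊆ Y := by
    intro X Y hX hGY hF x hx
    rw [← hGY]
    refine ⟨hX hx, fun y hy hxy => ?_⟩
    rw [← hF]
    exact ⟨hy, x, hx, hxy⟩
  exact Set.Subset.antisymm (key X Y hX hGY hF) (key Y X hY hGX hF.symm)
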